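/- arXiv:0710.1959 — 2 statements merged into one kernel-verified Lean document; each statement's English description precedes it below -/
import Mathlib

section
/- Let E: [0,∞) → [0,∞) be a non-increasing function and suppose there exists C > 0 such that for all t ≥ 0, ∫_t^∞ E(s) ds ≤ C E(t). Then, setting T = C, for all t ≥ T one has E(t) ≤ E(0) exp(1 - t/T). -/
open MeasureTheory Set

/-- **Komornik's integral inequality, case α = 0 (exponential decay).**
If `E : [0,∞) → [0,∞)` is non-increasing and `∫_t^∞ E(s) ds ≤ C E(t)` for all `t ≥ 0`,
then with `T = C` one has `E(t) ≤ E(0) exp(1 - t/T)` for all `t ≥ T`. -/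
theorem komornik_exponential_decay
    (E : ℝ → ℝ) (hE0 : ∀ t, 0 ≤ t → 0 ≤ E t)
    (hmono : ∀ s t, 0 ≤ s → s ≤ t → E t ≤ E s)
    (hint : IntegrableOn E (Ioi 0))
    (C : ℝ) (hC : 0 < C)
    (hineq : ∀ t, 0 ≤ t → ∫ s in Ioi t, E s ≤ C * E t) :
    ∀ t, C ≤ t → E t ≤ E 0 * Real.exp (1 - t / C) := by
  set F : ℝ → ℝ := fun t => ∫ s in Ioi t, E s with hF
  have hsub : ∀ a : ℝ, 0 ≤ a → ∀ s : Set ℝ, s ⊆ Ioi a → IntegrableOn E s := by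
    intro a ha s hs
    exact hint.mono_set (hs.trans (fun x hx => lt_of_le_of_lt ha hx))
  have hFsplit : ∀ a b : ℝ, 0 ≤ a → a ≤ b → F a = (∫ s in Ioc a b, E s) + F b := by
    intro a b ha hab
    have h1 : IntegrableOn E (Ioc a b) := hsub a ha _ Ioc_subset_Ioi_self
    have h2 : IntegrableOn E (Ioi b) := hsub a ha _ (Ioi_subset_Ioi hab)
    have hd : Disjoint (Ioc a b) (Ioi b) :=
      (Iic_disjoint_Ioi le_rfl).mono_left Ioc_subset_Iic_self
    have := setIntegral_union hd measurableSet_Ioi h1 h2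
    rw [hF]
    simp only
    rw [← Ioc_union_Ioi_eq_Ioi hab, this]
  have hFnonneg : ∀ a : ℝ, 0 ≤ a → 0 ≤ F a := by
    intro a ha
    apply setIntegral_nonneg measurableSet_Ioi
    intro x hx
    exact hE0 x (le_of_lt (lt_of_le_of_lt ha hx))
  -- lower bound on integral over Ioc a b by (b-a) * E b
  have hlow : ∀ a b : ℝ, 0 ≤ a → a ≤ b → (b - a) * E b ≤ ∫ s in Ioc a b, E s := by
    intro a b ha hab
    have h1 : IntegrableOn E (Ioc a b) := hsub a ha _ Ioc_subset_Ioi_self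
    have := setIntegral_ge_of_const_le (c := E b) measurableSet_Ioc
      (by rw [Real.volume_Ioc]; exact ENNReal.ofReal_ne_top)
      (fun x hx => hmono x b (le_trans ha (le_of_lt hx.1)) hx.2) h1
    rwa [measureReal_def, Real.volume_Ioc, ENNReal.toReal_ofReal (by linarith), smul_eq_mul] at this
  -- key step : F (s+h) * (1 + h/C) ≤ F s
  have hstep : ∀ s h : ℝ, 0 ≤ s → 0 ≤ h → F (s + h) * (1 + h / C) ≤ F s := by
    intro s h hs hh
    have h1 : F (s + h) ≤ C * E (s + h) := hineq (s + h) (by linarith)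
    have h2 : h * E (s + h) ≤ ∫ x in Ioc s (s + h), E x := by
      have := hlow s (s + h) hs (by linarith)
      simpa using this
    have h3 : F s = (∫ x in Ioc s (s + h), E x) + F (s + h) :=
      hFsplit s (s + h) hs (by linarith)
    have h4 : F (s + h) * (h / C) ≤ h * E (s + h) := by
      calc F (s + h) * (h / C) ≤ (C * E (s + h)) * (h / C) := by
            apply mul_le_mul_of_nonneg_right h1
            positivity
        _ = h * E (s + h) := by field_simp
    nlinarith [hFnonneg (s + h) (by linarith : (0:ℝ) ≤ s + h)]
  -- iterate : F (n*h) * (1+h/C)^n ≤ F 0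
  have hiter : ∀ (h : ℝ), 0 ≤ h → ∀ n : ℕ, F (n * h) * (1 + h / C) ^ n ≤ F 0 := by
    intro h hh n
    induction n with
    | zero => simp
    | succ n ih =>
      have hs : (0:ℝ) ≤ n * h := by positivity
      have := hstep (n * h) h hs hh
      have hpos : (0:ℝ) ≤ (1 + h / C) ^ n := by positivity
      calc F (↑(n+1) * h) * (1 + h / C) ^ (n + 1)
          = (F (n * h + h) * (1 + h / C)) * (1 + h / C) ^ n := by
            push_cast; ring_nf
        _ ≤ F (n * h) * (1 + h / C) ^ n := mul_le_mul_of_nonneg_right this hpos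
        _ ≤ F 0 := ih
  -- limit : F t ≤ F 0 * exp (-(t/C))
  have hFdecay : ∀ t : ℝ, 0 ≤ t → F t * Real.exp (t / C) ≤ F 0 := by
    intro t ht
    have key : ∀ n : ℕ, 1 ≤ n → F t * (1 + (t / C) / n) ^ n ≤ F 0 := by
      intro n hn
      have hnpos : (0:ℝ) < n := by exact_mod_cast hn
      have hh : (0:ℝ) ≤ t / n := by positivity
      have := hiter (t / n) hh n
      have heq : (n : ℝ) * (t / n) = t := by field_simp
      rw [heq] at this
      have : F t * (1 + (t / n) / C) ^ n ≤ F 0 := this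
      have harg : (t / (n:ℝ)) / C = (t / C) / n := by ring
      rwa [harg] at this
    have hlim : Filter.Tendsto (fun n : ℕ => F t * (1 + (t / C) / n) ^ n)
        Filter.atTop (nhds (F t * Real.exp (t / C))) :=
      (Real.tendsto_one_add_div_pow_exp (t / C)).const_mul (F t)
    exact le_of_tendsto hlim (Filter.eventually_atTop.2 ⟨1, key⟩)
  -- conclusion
  intro t ht
  have ht0 : 0 ≤ t := le_trans hC.le ht
  have ha : 0 ≤ t - C := by linarith
  have h1 : C * E t ≤ ∫ x in Ioc (t - C) t, E x := by
    have := hlow (t - C) t ha (by linarith)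
    simpa using this
  have h2 : (∫ x in Ioc (t - C) t, E x) ≤ F (t - C) := by
    have := hFsplit (t - C) t ha (by linarith)
    have := hFnonneg t ht0
    linarith
  have h3 : F (t - C) * Real.exp ((t - C) / C) ≤ F 0 := hFdecay (t - C) ha
  have h4 : F 0 ≤ C * E 0 := hineq 0 le_rfl
  have hexp : Real.exp ((t - C) / C) > 0 := Real.exp_pos _
  have h5 : C * E t * Real.exp ((t - C) / C) ≤ C * E 0 := by
    calc C * E t * Real.exp ((t - C) / C)
        ≤ F (t - C) * Real.exp ((t - C) / C) := by
          apply mul_le_mul_of_nonneg_right (le_trans h1 h2) hexp.le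
      _ ≤ F 0 := h3
      _ ≤ C * E 0 := h4
  have h6 : E t * Real.exp ((t - C) / C) ≤ E 0 := by
    have := mul_le_mul_of_nonneg_left h5 (by positivity : (0:ℝ) ≤ 1 / C)
    calc E t * Real.exp ((t - C) / C)
        = 1 / C * (C * E t * Real.exp ((t - C) / C)) := by field_simp
      _ ≤ 1 / C * (C * E 0) := this
      _ = E 0 := by field_simp
  have hexpeq : Real.exp (1 - t / C) = 1 / Real.exp ((t - C) / C) := by
    rw [eq_div_iff hexp.ne', ← Real.exp_add]
    rw [show (1 - t / C) + (t - C) / C = 0 by field_simp; ring, Real.exp_zero]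
  rw [hexpeq, mul_one_div, le_div_iff₀ hexp]
  exact h6
end

section
/- Let U(r,θ) = r^{1/2} sin(θ/2) in polar coordinates on the upper half-plane, and let m be a C¹ vector field on R² with m(0)·e₂ = 0, where e₂ denotes the outward normal direction at the origin (pointing into the lower half-plane). On the half-circle C_ε = {(ε cos θ, ε sin θ) : 0 < θ < π}, with ν the unit normal pointing toward the origin, one has lim_{ε→0} ∫_{C_ε} (2(ν·∇U)(m·∇U) - (m·ν)|∇U|²) dℓ = (π/4) m(0)·τ, where τ is the unit tangent vector to the boundary at 0 pointing from the Neumann side toward the Dirichlet side. -/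
open Set Filter Topology MeasureTheory
open scoped RealInnerProductSpace

noncomputable section

/-- The vector `(a, b)` of the Euclidean plane. -/
def vec2 (a b : ℝ) : EuclideanSpace ℝ (Fin 2) :=
  (WithLp.equiv 2 (Fin 2 → ℝ)).symm ![a, b]

/-- Shamir's singular function `U(r,θ) = r^{1/2} sin(θ/2)` in Cartesian coordinates:
`U(x, y) = sqrt((r - x)/2)` where `r = sqrt(x² + y²)`. -/
def shamirU : EuclideanSpace ℝ (Fin 2) → ℝ :=
  fun p => Real.sqrt ((Real.sqrt (p 0 ^ 2 + p 1 ^ 2) - p 0) / 2)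

lemma inner_vec2_right (v : EuclideanSpace ℝ (Fin 2)) (c d : ℝ) :
    ⟪v, vec2 c d⟫ = v 0 * c + v 1 * d := by
  simp [vec2, PiLp.inner_apply, Fin.sum_univ_two]
  ring

lemma inner_vec2_left (v : EuclideanSpace ℝ (Fin 2)) (c d : ℝ) :
    ⟪vec2 c d, v⟫ = c * v 0 + d * v 1 := by
  simp [vec2, PiLp.inner_apply, Fin.sum_univ_two]
  ring

lemma norm_vec2_sq (a b : ℝ) : ‖vec2 a b‖ ^ 2 = a ^ 2 + b ^ 2 := by
  rw [EuclideanSpace.norm_sq_eq]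
  simp [vec2, Fin.sum_univ_two]

lemma vec2_smul (a b c : ℝ) : vec2 (c * a) (c * b) = c • vec2 a b := by
  ext i
  fin_cases i <;> simp [vec2]

lemma vec2_decomp (a b : ℝ) : vec2 a b = a • vec2 1 0 + b • vec2 0 1 := by
  ext i
  fin_cases i <;> simp [vec2]

lemma continuous_vec2 {f g : ℝ → ℝ} (hf : Continuous f) (hg : Continuous g) :
    Continuous fun t => vec2 (f t) (g t) := by
  have h : (fun t => vec2 (f t) (g t)) = fun t => (f t) • vec2 1 0 + (g t) • vec2 0 1 := by
    funext t; rw [vec2_decomp]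
  rw [h]
  exact (hf.smul continuous_const).add (hg.smul continuous_const)

lemma hasGradientAt_shamirU (x y : ℝ) (hr : 0 < x ^ 2 + y ^ 2)
    (hx : x < Real.sqrt (x ^ 2 + y ^ 2)) :
    HasGradientAt shamirU
      (vec2 ((x / Real.sqrt (x ^ 2 + y ^ 2) - 1) / (4 * shamirU (vec2 x y)))
            ((y / Real.sqrt (x ^ 2 + y ^ 2)) / (4 * shamirU (vec2 x y)))) (vec2 x y) := by
  set r : ℝ := Real.sqrt (x ^ 2 + y ^ 2) with hrdef
  have hrpos : 0 < r := Real.sqrt_pos.2 hr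
  have hUval : shamirU (vec2 x y) = Real.sqrt ((r - x) / 2) := rfl
  have hUpos : 0 < shamirU (vec2 x y) := by
    rw [hUval]; exact Real.sqrt_pos.2 (by linarith)
  set U : ℝ := shamirU (vec2 x y) with hUdef
  have hproj : ∀ i : Fin 2, HasFDerivAt (fun p : EuclideanSpace ℝ (Fin 2) => p i)
      (EuclideanSpace.proj (𝕜 := ℝ) i) (vec2 x y) := by
    intro i
    have h := (EuclideanSpace.proj (𝕜 := ℝ) i).hasFDerivAt (x := vec2 x y)
    have e : ⇑(EuclideanSpace.proj (𝕜 := ℝ) i) = fun p : EuclideanSpace ℝ (Fin 2) => p i := by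
      ext p; simp
    rwa [e] at h
  have h0 := hproj 0
  have h1 := hproj 1
  have hx0 : (vec2 x y : EuclideanSpace ℝ (Fin 2)) 0 = x := rfl
  have hy0 : (vec2 x y : EuclideanSpace ℝ (Fin 2)) 1 = y := rfl
  have hN : HasFDerivAt (fun p : EuclideanSpace ℝ (Fin 2) => p 0 ^ 2 + p 1 ^ 2)
      ((2 * x) • EuclideanSpace.proj (𝕜 := ℝ) (0 : Fin 2)
        + (2 * y) • EuclideanSpace.proj (𝕜 := ℝ) (1 : Fin 2)) (vec2 x y) := by
    have h := ((h0.mul h0).add (h1.mul h1))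
    have e1 : (fun p : EuclideanSpace ℝ (Fin 2) => p 0 * p 0 + p 1 * p 1)
        = fun p : EuclideanSpace ℝ (Fin 2) => p 0 ^ 2 + p 1 ^ 2 := by
      funext p; ring
    have e2 : (vec2 x y 0) • EuclideanSpace.proj (𝕜 := ℝ) (0 : Fin 2)
        + (vec2 x y 0) • EuclideanSpace.proj (𝕜 := ℝ) (0 : Fin 2)
        + ((vec2 x y 1) • EuclideanSpace.proj (𝕜 := ℝ) (1 : Fin 2)
        + (vec2 x y 1) • EuclideanSpace.proj (𝕜 := ℝ) (1 : Fin 2))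
        = (2 * x) • EuclideanSpace.proj (𝕜 := ℝ) (0 : Fin 2)
        + (2 * y) • EuclideanSpace.proj (𝕜 := ℝ) (1 : Fin 2) := by
      ext u
      simp [hx0, hy0, smul_eq_mul]
      ring
    simp only [Pi.mul_def, Pi.add_def] at h
    rw [e1, e2] at h
    exact h
  have hsq : HasDerivAt Real.sqrt (1 / (2 * r)) (x ^ 2 + y ^ 2) := by
    have := Real.hasDerivAt_sqrt (ne_of_gt hr)
    simpa [← hrdef] using this
  have hR : HasFDerivAt (fun p : EuclideanSpace ℝ (Fin 2) => Real.sqrt (p 0 ^ 2 + p 1 ^ 2))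
      ((1 / (2 * r)) • ((2 * x) • EuclideanSpace.proj (𝕜 := ℝ) (0 : Fin 2)
        + (2 * y) • EuclideanSpace.proj (𝕜 := ℝ) (1 : Fin 2))) (vec2 x y) := by
    have hsq' : HasDerivAt Real.sqrt (1 / (2 * r))
        ((fun p : EuclideanSpace ℝ (Fin 2) => p 0 ^ 2 + p 1 ^ 2) (vec2 x y)) := hsq
    exact HasDerivAt.comp_hasFDerivAt (x := vec2 x y) hsq' hN
  have hf : HasFDerivAt (fun p : EuclideanSpace ℝ (Fin 2) => (Real.sqrt (p 0 ^ 2 + p 1 ^ 2) - p 0) / 2)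
      ((1/2 : ℝ) • ((1 / (2 * r)) • ((2 * x) • EuclideanSpace.proj (𝕜 := ℝ) (0 : Fin 2)
        + (2 * y) • EuclideanSpace.proj (𝕜 := ℝ) (1 : Fin 2))
        - EuclideanSpace.proj (𝕜 := ℝ) (0 : Fin 2))) (vec2 x y) := by
    have h := (hR.sub h0).const_smul (1/2 : ℝ)
    have e1 : (fun p : EuclideanSpace ℝ (Fin 2) =>
        (1/2 : ℝ) • (Real.sqrt (p 0 ^ 2 + p 1 ^ 2) - p 0))
        = fun p : EuclideanSpace ℝ (Fin 2) => (Real.sqrt (p 0 ^ 2 + p 1 ^ 2) - p 0) / 2 := by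
      funext p; simp [smul_eq_mul]; ring
    simp only [Pi.smul_def, Pi.sub_def] at h
    rw [e1] at h
    exact h
  have hsq2 : HasDerivAt Real.sqrt (1 / (2 * U)) ((r - x) / 2) := by
    have hne : ((r - x) / 2 : ℝ) ≠ 0 := ne_of_gt (by linarith)
    have := Real.hasDerivAt_sqrt hne
    rwa [← hUval] at this
  have hfinal : HasFDerivAt shamirU
      ((1 / (2 * U)) • ((1/2 : ℝ) • ((1 / (2 * r)) • ((2 * x) • EuclideanSpace.proj (𝕜 := ℝ) (0 : Fin 2)
        + (2 * y) • EuclideanSpace.proj (𝕜 := ℝ) (1 : Fin 2))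
        - EuclideanSpace.proj (𝕜 := ℝ) (0 : Fin 2)))) (vec2 x y) := by
    have hsq2' : HasDerivAt Real.sqrt (1 / (2 * U))
        ((fun p : EuclideanSpace ℝ (Fin 2) => (Real.sqrt (p 0 ^ 2 + p 1 ^ 2) - p 0) / 2) (vec2 x y)) := hsq2
    exact HasDerivAt.comp_hasFDerivAt (x := vec2 x y) hsq2' hf
  rw [hasGradientAt_iff_hasFDerivAt]
  refine hfinal.congr_fderiv ?_
  ext u
  simp only [ContinuousLinearMap.smul_apply, ContinuousLinearMap.add_apply,
    ContinuousLinearMap.sub_apply, smul_eq_mul,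
    InnerProductSpace.toDual_apply_apply, PiLp.inner_apply, RCLike.inner_apply, conj_trivial,
    Fin.sum_univ_two, PiLp.proj_apply]
  rw [show (vec2 ((x / r - 1) / (4 * U)) ((y / r) / (4 * U))) 0 = (x / r - 1) / (4 * U) from rfl,
    show (vec2 ((x / r - 1) / (4 * U)) ((y / r) / (4 * U))) 1 = (y / r) / (4 * U) from rfl]
  field_simp
  ring

lemma cos_eq_half {θ : ℝ} : Real.cos θ = 1 - 2 * Real.sin (θ/2) ^ 2 := by
  have h2 : Real.sin (θ/2) ^ 2 = 1/2 - Real.cos (2 * (θ/2)) / 2 := Real.sin_sq_eq_half_sub _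
  rw [show (2 : ℝ) * (θ/2) = θ by ring] at h2
  linarith

lemma sin_eq_half {θ : ℝ} : Real.sin θ = 2 * (Real.sin (θ/2) * Real.cos (θ/2)) := by
  have := Real.sin_two_mul (θ/2)
  rw [show (2 : ℝ) * (θ/2) = θ by ring] at this
  linarith

lemma gradient_shamirU_polar {ε θ : ℝ} (hε : 0 < ε) (hθ : θ ∈ Ioo 0 Real.pi) :
    gradient shamirU (vec2 (ε * Real.cos θ) (ε * Real.sin θ))
      = vec2 (-Real.sin (θ/2) / (2 * Real.sqrt ε)) (Real.cos (θ/2) / (2 * Real.sqrt ε)) := by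
  obtain ⟨hθ0, hθπ⟩ := hθ
  have hs : 0 < Real.sin (θ/2) :=
    Real.sin_pos_of_pos_of_lt_pi (by linarith) (by linarith [Real.pi_pos])
  have hq : 0 < Real.sqrt ε := Real.sqrt_pos.2 hε
  have hcos1 : Real.cos θ < 1 := by nlinarith [cos_eq_half (θ := θ)]
  have hsum : (ε * Real.cos θ) ^ 2 + (ε * Real.sin θ) ^ 2 = ε ^ 2 := by
    nlinarith [Real.sin_sq_add_cos_sq θ]
  have hrr : Real.sqrt ((ε * Real.cos θ) ^ 2 + (ε * Real.sin θ) ^ 2) = ε := by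
    rw [hsum]; exact Real.sqrt_sq hε.le
  have hr : 0 < (ε * Real.cos θ) ^ 2 + (ε * Real.sin θ) ^ 2 := by rw [hsum]; positivity
  have hx : ε * Real.cos θ < Real.sqrt ((ε * Real.cos θ) ^ 2 + (ε * Real.sin θ) ^ 2) := by
    rw [hrr]; nlinarith
  have hU : shamirU (vec2 (ε * Real.cos θ) (ε * Real.sin θ)) = Real.sqrt ε * Real.sin (θ/2) := by
    show Real.sqrt ((Real.sqrt ((ε * Real.cos θ) ^ 2 + (ε * Real.sin θ) ^ 2) - ε * Real.cos θ) / 2) = _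
    rw [hrr, Real.sin_half_eq_sqrt hθ0.le (by linarith [Real.pi_pos]),
      ← Real.sqrt_mul hε.le]
    congr 1; ring
  have hgrad := hasGradientAt_shamirU (ε * Real.cos θ) (ε * Real.sin θ) hr hx
  rw [hgrad.gradient, hrr, hU]
  have hcos := cos_eq_half (θ := θ)
  have hsin := sin_eq_half (θ := θ)
  refine congrArg₂ vec2 ?_ ?_
  · rw [hcos]; field_simp; ring
  · rw [hsin]; field_simp; ring

/-- **Singular contribution in the Rellich relation.** For the Shamir singular function
`U(r,θ) = r^{1/2} sin(θ/2)` and a `C¹` vector field `m` with `m(0)·e₂ = 0`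
(`e₂ = (0,-1)` the outward normal at the origin), the integral over the half-circle `C_ε`
(with `ν` the unit normal pointing toward the origin) of
`2(ν·∇U)(m·∇U) - (m·ν)|∇U|²` tends to `(π/4) m(0)·τ` with `τ = e₁`, as `ε → 0⁺`. -/
theorem singular_halfcircle_limit
    (m : EuclideanSpace ℝ (Fin 2) → EuclideanSpace ℝ (Fin 2))
    (hm : ContDiff ℝ 1 m)
    (hm0 : ⟪m 0, vec2 0 (-1)⟫ = 0) :
    Tendsto
      (fun ε : ℝ => ∫ θ in Ioo 0 Real.pi,
        (2 * ⟪vec2 (-Real.cos θ) (-Real.sin θ), gradient shamirU (vec2 (ε * Real.cos θ) (ε * Real.sin θ))⟫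
            * ⟪m (vec2 (ε * Real.cos θ) (ε * Real.sin θ)),
                gradient shamirU (vec2 (ε * Real.cos θ) (ε * Real.sin θ))⟫
          - ⟪m (vec2 (ε * Real.cos θ) (ε * Real.sin θ)), vec2 (-Real.cos θ) (-Real.sin θ)⟫
            * ‖gradient shamirU (vec2 (ε * Real.cos θ) (ε * Real.sin θ))‖ ^ 2) * ε)
      (𝓝[>] 0)
      (𝓝 (Real.pi / 4 * ⟪m 0, vec2 1 0⟫)) := by
  -- step 1: the integrand simplifies to `m p 0 / 4`
  have key : ∀ᶠ ε in 𝓝[>] (0:ℝ),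
      (∫ θ in Ioo 0 Real.pi,
        (2 * ⟪vec2 (-Real.cos θ) (-Real.sin θ), gradient shamirU (vec2 (ε * Real.cos θ) (ε * Real.sin θ))⟫
            * ⟪m (vec2 (ε * Real.cos θ) (ε * Real.sin θ)),
                gradient shamirU (vec2 (ε * Real.cos θ) (ε * Real.sin θ))⟫
          - ⟪m (vec2 (ε * Real.cos θ) (ε * Real.sin θ)), vec2 (-Real.cos θ) (-Real.sin θ)⟫
            * ‖gradient shamirU (vec2 (ε * Real.cos θ) (ε * Real.sin θ))‖ ^ 2) * ε)
      = ∫ θ in Ioo 0 Real.pi, (m (vec2 (ε * Real.cos θ) (ε * Real.sin θ))) 0 / 4 := by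
    filter_upwards [self_mem_nhdsWithin] with ε hε
    refine setIntegral_congr_fun measurableSet_Ioo fun θ hθ => ?_
    have hε' : (0:ℝ) < ε := hε
    rw [gradient_shamirU_polar hε' hθ]
    rw [inner_vec2_left, inner_vec2_right, inner_vec2_right, norm_vec2_sq]
    rw [show (vec2 (-Real.sin (θ/2) / (2 * Real.sqrt ε)) (Real.cos (θ/2) / (2 * Real.sqrt ε))) 0
          = -Real.sin (θ/2) / (2 * Real.sqrt ε) from rfl,
        show (vec2 (-Real.sin (θ/2) / (2 * Real.sqrt ε)) (Real.cos (θ/2) / (2 * Real.sqrt ε))) 1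
          = Real.cos (θ/2) / (2 * Real.sqrt ε) from rfl]
    have hq : (0:ℝ) < Real.sqrt ε := Real.sqrt_pos.2 hε'
    have hq2 : Real.sqrt ε ^ 2 = ε := Real.sq_sqrt hε'.le
    have hp : Real.sin (θ/2) ^ 2 + Real.cos (θ/2) ^ 2 = 1 := Real.sin_sq_add_cos_sq _
    set s := Real.sin (θ/2) with hs_def
    set c := Real.cos (θ/2) with hc_def
    set q := Real.sqrt ε with hq_def
    generalize (m (vec2 (ε * Real.cos θ) (ε * Real.sin θ))) 0 = m0
    generalize (m (vec2 (ε * Real.cos θ) (ε * Real.sin θ))) 1 = m1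
    rw [cos_eq_half (θ := θ), sin_eq_half (θ := θ), ← hq2]
    field_simp
    linear_combination (4*(m0*(2*s^2+1) - 2*s*c*m1)) * hp
  -- step 2: the limit of the simplified integrals
  have hval : Real.pi / 4 * ⟪m 0, vec2 1 0⟫ = ∫ θ in Ioo 0 Real.pi, (m 0) 0 / 4 := by
    rw [setIntegral_const, inner_vec2_right]
    simp [Real.volume_Ioo, ENNReal.toReal_ofReal Real.pi_pos.le]
    rw [max_eq_left Real.pi_pos.le]
    ring
  have hvcont : ∀ ε : ℝ, Continuous fun θ : ℝ => vec2 (ε * Real.cos θ) (ε * Real.sin θ) := by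
    intro ε
    exact continuous_vec2 (continuous_const.mul Real.continuous_cos)
      (continuous_const.mul Real.continuous_sin)
  obtain ⟨C, hC⟩ := (isCompact_closedBall (0 : EuclideanSpace ℝ (Fin 2)) 1).exists_bound_of_continuousOn
    (hm.continuous.continuousOn (s := Metric.closedBall 0 1))
  have habs : ∀ p : EuclideanSpace ℝ (Fin 2), |p 0| ≤ ‖p‖ := by
    intro p
    have h := abs_real_inner_le_norm p (vec2 1 0)
    rw [inner_vec2_right] at h
    have hn : ‖vec2 (1:ℝ) 0‖ = 1 := by
      have := norm_vec2_sq 1 0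
      nlinarith [norm_nonneg (vec2 (1:ℝ) 0)]
    simpa [hn] using h
  have hnice : Tendsto (fun ε : ℝ => ∫ θ in Ioo 0 Real.pi,
      (m (vec2 (ε * Real.cos θ) (ε * Real.sin θ))) 0 / 4) (𝓝[>] 0)
      (𝓝 (∫ θ in Ioo 0 Real.pi, (m 0) 0 / 4)) := by
    refine tendsto_integral_filter_of_dominated_convergence (fun _ => |C| / 4) ?_ ?_ ?_ ?_
    · filter_upwards with ε
      exact (Continuous.aestronglyMeasurable (by
        exact (((EuclideanSpace.proj (𝕜 := ℝ) (0 : Fin 2)).continuous.comp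
          (hm.continuous.comp (hvcont ε))).div_const 4)))
    · filter_upwards [Ioc_mem_nhdsGT_of_mem (show (0:ℝ) ∈ Ico 0 1 by constructor <;> norm_num)]
        with ε hε
      filter_upwards with θ
      have hnorm : ‖vec2 (ε * Real.cos θ) (ε * Real.sin θ)‖ ≤ 1 := by
        have h1 : ‖vec2 (ε * Real.cos θ) (ε * Real.sin θ)‖ ^ 2 = ε ^ 2 := by
          rw [norm_vec2_sq]; nlinarith [Real.sin_sq_add_cos_sq θ]
        nlinarith [norm_nonneg (vec2 (ε * Real.cos θ) (ε * Real.sin θ)), hε.1, hε.2]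
      have hmem : vec2 (ε * Real.cos θ) (ε * Real.sin θ) ∈ Metric.closedBall (0 : EuclideanSpace ℝ (Fin 2)) 1 := by
        simpa [Metric.mem_closedBall, dist_zero_right] using hnorm
      have h2 := hC _ hmem
      have h3 := habs (m (vec2 (ε * Real.cos θ) (ε * Real.sin θ)))
      rw [Real.norm_eq_abs, abs_div]
      have : |(m (vec2 (ε * Real.cos θ) (ε * Real.sin θ))) 0| ≤ |C| := by
        calc _ ≤ ‖m (vec2 (ε * Real.cos θ) (ε * Real.sin θ))‖ := h3
          _ ≤ C := h2
          _ ≤ |C| := le_abs_self C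
      calc |(m (vec2 (ε * Real.cos θ) (ε * Real.sin θ))) 0| / |(4:ℝ)| 
            = |(m (vec2 (ε * Real.cos θ) (ε * Real.sin θ))) 0| / 4 := by norm_num
        _ ≤ |C| / 4 := by linarith
    · exact integrable_const _
    · filter_upwards with θ
      have hc : Tendsto (fun ε : ℝ => vec2 (ε * Real.cos θ) (ε * Real.sin θ)) (𝓝 0)
          (𝓝 (vec2 (0 * Real.cos θ) (0 * Real.sin θ))) := by
        exact (continuous_vec2 (continuous_id.mul continuous_const)
          (continuous_id.mul continuous_const)).tendsto 0
      have h0 : vec2 (0 * Real.cos θ) (0 * Real.sin θ) = 0 := by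
        ext i; fin_cases i <;> simp [vec2]
      rw [h0] at hc
      have := (((EuclideanSpace.proj (𝕜 := ℝ) (0 : Fin 2)).continuous.comp
        hm.continuous).tendsto 0).comp hc
      have h5 : Tendsto (fun ε : ℝ => (m (vec2 (ε * Real.cos θ) (ε * Real.sin θ))) 0) (𝓝 0)
          (𝓝 ((m 0) 0)) := this
      exact (h5.div_const 4).mono_left nhdsWithin_le_nhds
  rw [hval]
  exact Tendsto.congr' (key.mono fun ε h => h.symm) hnice
end
end
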